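/- Let D be a division ring. Suppose that either σ : D → D is a ring anti-automorphism with σ ∘ σ = id and ε ∈ D is an arbitrary element with ε ≠ 0 and σ(ε) = ε, or σ : D → D is a ring automorphism and ε ∈ D satisfies ε ≠ 0, σ(ε) = ε and σ(σ(x)) = ε⁻¹·x·ε for all x ∈ D. Then the map φ : D → D, φ(x) = ε·σ(x), is a bijective additive map satisfying φ(a⁻¹) = (φ⁻¹(a))⁻¹ for all a ∈ D with a ≠ 0. -/

import Mathlib

/-- If `σ` is an anti-automorphism of a division ring `D`
with `σ ∘ σ = id` and `ε ≠ 0`, `σ(ε) = ε`, or `σ` is an automorphism with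
`ε ≠ 0`, `σ(ε) = ε` and `σ²(x) = ε⁻¹·x·ε`, then `φ(x) = ε·σ(x)` is a bijective
additive map satisfying `φ(a⁻¹) = (φ⁻¹(a))⁻¹` for all `a ≠ 0`, i.e. a flip
automorphism of the Moufang set `M(D)`. -/
theorem division_ring_flip_of_aut {D : Type*} [DivisionRing D]
    (σ : D → D) (hbij : Function.Bijective σ)
    (hadd : ∀ x y : D, σ (x + y) = σ x + σ y) (hone : σ 1 = 1)
    (ε : D) (hε : ε ≠ 0) (hfix : σ ε = ε)
    (hcase : ((∀ x y : D, σ (x * y) = σ y * σ x) ∧ ∀ x : D, σ (σ x) = x) ∨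
             ((∀ x y : D, σ (x * y) = σ x * σ y) ∧ ∀ x : D, σ (σ x) = ε⁻¹ * x * ε)) :
    Function.Bijective (fun x : D => ε * σ x) ∧
    (∀ x y : D, ε * σ (x + y) = ε * σ x + ε * σ y) ∧
    (∀ a b : D, a ≠ 0 → ε * σ b = a → ε * σ a⁻¹ = b⁻¹) := by
  have hzero : σ 0 = 0 := by
    have := hadd 0 0
    simp only [add_zero] at this
    exact add_eq_left.mp this.symm
  refine ⟨((Equiv.mulLeft₀ ε hε).bijective).comp hbij, fun x y => by rw [hadd, mul_add],
    fun a b ha hab => ?_⟩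
  have hb : b ≠ 0 := by
    rintro rfl
    rw [hzero, mul_zero] at hab
    exact ha hab.symm
  have hσa : σ a = b * ε := by
    rcases hcase with ⟨hm, hs⟩ | ⟨hm, hs⟩
    · rw [← hab, hm, hfix, hs]
    · rw [← hab, hm, hfix, hs, ← mul_assoc, ← mul_assoc, mul_inv_cancel₀ hε, one_mul]
  have hinv : σ a⁻¹ = (σ a)⁻¹ := by
    rcases hcase with ⟨hm, _⟩ | ⟨hm, _⟩
    · have : σ a⁻¹ * σ a = 1 := by rw [← hm, mul_inv_cancel₀ ha, hone]
      exact eq_inv_of_mul_eq_one_left this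
    · have : σ a⁻¹ * σ a = 1 := by rw [← hm, inv_mul_cancel₀ ha, hone]
      exact eq_inv_of_mul_eq_one_left this
  rw [hinv, hσa, mul_inv_rev, ← mul_assoc, mul_inv_cancel₀ hε, one_mul]
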